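/- For positive integers i and N with N - 3 ≥ i ≥ √(2N), one has h_i(N) > 0 and 2N^{i+3} > P_i(N) > (N-1)(N-2)···(N-(i+2)) ≥ 0, where P_i(x) = Σ_{j=0}^{i} s(i+2,j;1) x^j and h_i(x) = x^{i+1}((i+2)(i+3)/2 - x). -/

import Mathlib

/-- The non-centered Stirling numbers of the first kind `s(m,j;1)`, defined
by `(x-1)(x-2)⋯(x-m) = Σ_{j=0}^{m} s(m,j;1) x^j`. -/
noncomputable def stirling1 (m j : ℕ) : ℤ :=
  (∏ k ∈ Finset.range m, (Polynomial.X - Polynomial.C ((k : ℤ) + 1))).coeff j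

lemma gauss_sum_real (n : ℕ) : ∑ k ∈ Finset.range n, ((k:ℝ)+1) = n*(n+1)/2 := by
  induction n with
  | zero => simp
  | succ n ih => rw [Finset.sum_range_succ, ih]; push_cast; ring

open Polynomial in
lemma P_key (i N : ℕ) :
    ∑ j ∈ Finset.range (i + 1), (stirling1 (i + 2) j : ℝ) * (N : ℝ) ^ j
      = (∏ k ∈ Finset.range (i + 2), ((N : ℝ) - (k + 1)))
        + (N:ℝ)^(i+1) * (((i:ℝ)+2)*((i:ℝ)+3)/2 - N) := by
  set q : Polynomial ℝ := ∏ k ∈ Finset.range (i+2), (X - C ((k:ℝ)+1)) with hq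
  have hcoeff : ∀ j, q.coeff j = (stirling1 (i+2) j : ℝ) := by
    intro j
    have h1 : q = (∏ k ∈ Finset.range (i+2), (X - C ((k:ℤ)+1))).map (Int.castRingHom ℝ) := by
      rw [Polynomial.map_prod]
      simp [hq]
    rw [h1, Polynomial.coeff_map, stirling1]
    simp
  have hmonic : q.Monic := monic_prod_of_monic _ _ fun k _ => monic_X_sub_C _
  have hdeg : q.natDegree = i + 2 := by
    rw [hq, natDegree_prod_of_monic _ _ fun k _ => monic_X_sub_C _]
    simp only [natDegree_X_sub_C, Finset.sum_const, Finset.card_range, smul_eq_mul, mul_one]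
  have htop : q.coeff (i+2) = 1 := by
    have := hmonic.coeff_natDegree
    rwa [hdeg] at this
  have hnext : q.coeff (i+1) = -(((i:ℝ)+2)*((i:ℝ)+3)/2) := by
    have h1 : q.nextCoeff = -∑ k ∈ Finset.range (i+2), ((k:ℝ)+1) :=
      prod_X_sub_C_nextCoeff _
    have h2 : q.nextCoeff = q.coeff (i+1) := by
      rw [nextCoeff_of_natDegree_pos (by omega : 0 < q.natDegree), hdeg]
      norm_num
    rw [← h2, h1, gauss_sum_real]
    push_cast
    ring_nf
  have heval : q.eval (N:ℝ) = ∏ k ∈ Finset.range (i+2), ((N:ℝ) - (k+1)) := by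
    simp [hq, eval_prod]
  have hsum : q.eval (N:ℝ) = ∑ j ∈ Finset.range (i+3), q.coeff j * (N:ℝ)^j := by
    rw [eval_eq_sum_range, hdeg]
  rw [Finset.sum_range_succ, Finset.sum_range_succ] at hsum
  have hrw : ∑ j ∈ Finset.range (i+1), q.coeff j * (N:ℝ)^j
      = ∑ j ∈ Finset.range (i+1), (stirling1 (i+2) j : ℝ) * (N:ℝ)^j :=
    Finset.sum_congr rfl fun j _ => by rw [hcoeff]
  rw [hrw, htop, hnext] at hsum
  rw [← heval]
  rw [hsum]
  ring

theorem P_bounds (i N : ℕ) (hi : 0 < i) (hupper : i ≤ N - 3) (hN' : 3 ≤ N)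
    (hlower : Real.sqrt (2 * N) ≤ i) :
    (N : ℝ) ^ (i + 1) * (((i : ℝ) + 2) * ((i : ℝ) + 3) / 2 - N) > 0 ∧
      2 * (N : ℝ) ^ (i + 3)
        > ∑ j ∈ Finset.range (i + 1), (stirling1 (i + 2) j : ℝ) * (N : ℝ) ^ j ∧
      (∑ j ∈ Finset.range (i + 1), (stirling1 (i + 2) j : ℝ) * (N : ℝ) ^ j)
        > ∏ k ∈ Finset.range (i + 2), ((N : ℝ) - (k + 1)) ∧
      (∏ k ∈ Finset.range (i + 2), ((N : ℝ) - (k + 1))) ≥ 0 := by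
  have hNi : (i:ℝ) + 3 ≤ N := by
    have : i + 3 ≤ N := by omega
    exact_mod_cast this
  have hNpos : (0:ℝ) < N := by positivity
  have h2N : (2:ℝ) * N ≤ (i:ℝ)^2 := by
    have h1 : Real.sqrt (2*N) ^ 2 ≤ (i:ℝ)^2 := by
      apply pow_le_pow_left₀ (Real.sqrt_nonneg _) hlower
    rwa [Real.sq_sqrt (by positivity)] at h1
  have hM : (0:ℝ) < (N:ℝ)^(i+1) := by positivity
  have hc : ((i:ℝ)+2)*((i:ℝ)+3)/2 - N > 0 := by nlinarith
  have hi1 : (1:ℝ) ≤ (i:ℝ) := by exact_mod_cast hi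
  -- product bounds
  have hprod_nonneg : (0:ℝ) ≤ ∏ k ∈ Finset.range (i+2), ((N:ℝ) - (k+1)) := by
    apply Finset.prod_nonneg
    intro k hk
    have hk' : (k:ℝ) + 1 ≤ (i:ℝ) + 2 := by
      have hk2 := Finset.mem_range.mp hk
      have : (k:ℝ) ≤ (i:ℝ) + 1 := by exact_mod_cast Nat.lt_succ_iff.mp hk2
      linarith
    linarith
  have hprod_le : (∏ k ∈ Finset.range (i+2), ((N:ℝ) - (k+1))) ≤ (N:ℝ)^(i+2) := by
    calc (∏ k ∈ Finset.range (i+2), ((N:ℝ) - (k+1)))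
        ≤ ∏ k ∈ Finset.range (i+2), (N:ℝ) := by
          apply Finset.prod_le_prod
          · intro k hk
            have hk' : (k:ℝ) ≤ (i:ℝ) + 1 := by
              have := Finset.mem_range.mp hk
              have : (k:ℝ) ≤ (i:ℝ) + 1 := by exact_mod_cast Nat.le_of_lt_succ this
              linarith
            nlinarith
          · intro k hk; nlinarith
      _ = (N:ℝ)^(i+2) := by rw [Finset.prod_const, Finset.card_range]
  refine ⟨by positivity, ?_, ?_, hprod_nonneg⟩
  · rw [P_key]
    have hpow2 : (N:ℝ)^(i+2) = (N:ℝ)^(i+1) * N := by ring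
    have hpow3 : (N:ℝ)^(i+3) = (N:ℝ)^(i+1) * N * N := by ring
    have h1 : ((i:ℝ)+2)*((i:ℝ)+3)/2 < 2*(N:ℝ)^2 := by nlinarith
    nlinarith [mul_lt_mul_of_pos_left h1 hM]
  · rw [P_key]
    nlinarith
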